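/- arXiv:2005.08540 — 2 statements merged into one kernel-verified Lean document; each statement's English description precedes it below -/
import Mathlib

section
/- For every nonempty finite database D, every set of predicates S, and every real ε ≥ 0: if 1 − f2(D,S) ≤ ε, then 1 − f1(D,S) ≤ 2ε. -/
/-- A pair `(t, t')` of tuples *satisfies* the DC identified with the predicate set `S`
if some predicate `P ∈ S` fails on `(t, t')`. -/
def PairSat {α : Type*} (S : Set (α → α → Prop)) (t t' : α) : Prop :=
  ∃ P ∈ S, ¬ P t t'

/-- `f1 D S` is the number of pairs `(t,t') ∈ D × D` satisfying `S`, divided by `|D|²`. -/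
noncomputable def f1 {α : Type*} (D : Finset α) (S : Set (α → α → Prop)) : ℝ :=
  (Set.ncard {q : α × α | q.1 ∈ D ∧ q.2 ∈ D ∧ PairSat S q.1 q.2} : ℝ) / (D.card : ℝ) ^ 2

/-- `f2 D S` is the number of tuples `t ∈ D` such that for every `t' ∈ D` both `(t,t')`
and `(t',t)` satisfy `S`, divided by `|D|`. -/
noncomputable def f2 {α : Type*} (D : Finset α) (S : Set (α → α → Prop)) : ℝ :=
  (Set.ncard {t : α | t ∈ D ∧ ∀ t' ∈ D, PairSat S t t' ∧ PairSat S t' t} : ℝ) / (D.card : ℝ)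

/-- `f3 D S` is the maximum cardinality of a subset `D' ⊆ D` all of whose pairs satisfy `S`,
divided by `|D|`. -/
noncomputable def f3 {α : Type*} (D : Finset α) (S : Set (α → α → Prop)) : ℝ :=
  ((sSup {n : ℕ | ∃ D' : Finset α, D' ⊆ D ∧ (∀ t ∈ D', ∀ t' ∈ D', PairSat S t t') ∧
      D'.card = n} : ℕ) : ℝ) / (D.card : ℝ)

/-- if `1 - f2 D S ≤ ε` then `1 - f1 D S ≤ 2ε`. -/
theorem f2_le_implies_f1_le {α : Type*} (D : Finset α) (hD : D.Nonempty)
    (S : Set (α → α → Prop)) (ε : ℝ) (hε : 0 ≤ ε)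
    (h : 1 - f2 D S ≤ ε) :
    1 - f1 D S ≤ 2 * ε := by
  classical
  have hn0 : (0:ℝ) < (D.card : ℝ) := by exact_mod_cast Finset.card_pos.mpr hD
  set A : Finset (α × α) := (D ×ˢ D).filter (fun q => PairSat S q.1 q.2) with hA
  set G : Finset α := D.filter (fun t => ∀ t' ∈ D, PairSat S t t' ∧ PairSat S t' t) with hG
  have hAset : {q : α × α | q.1 ∈ D ∧ q.2 ∈ D ∧ PairSat S q.1 q.2} = ↑A := by
    ext q
    simp [hA, Finset.mem_filter, Finset.mem_product, and_assoc]
  have hGset : {t : α | t ∈ D ∧ ∀ t' ∈ D, PairSat S t t' ∧ PairSat S t' t} = ↑G := by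
    ext t
    simp [hG]
  have hf1 : f1 D S = (A.card : ℝ) / (D.card : ℝ) ^ 2 := by
    rw [f1, hAset, Set.ncard_coe_finset]
  have hf2 : f2 D S = (G.card : ℝ) / (D.card : ℝ) := by
    rw [f2, hGset, Set.ncard_coe_finset]
  have hAsub : A ⊆ D ×ˢ D := Finset.filter_subset _ _
  have hGsub : G ⊆ D := Finset.filter_subset _ _
  have hsub : (D ×ˢ D) \ A ⊆ (D \ G) ×ˢ D := by
    intro q hq
    simp only [Finset.mem_sdiff, Finset.mem_product, hA, Finset.mem_filter] at hq
    obtain ⟨⟨h1, h2⟩, h3⟩ := hq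
    have hns : ¬ PairSat S q.1 q.2 := fun hs => h3 ⟨⟨h1, h2⟩, hs⟩
    simp only [Finset.mem_product, Finset.mem_sdiff]
    refine ⟨⟨h1, fun hg => ?_⟩, h2⟩
    rw [hG, Finset.mem_filter] at hg
    exact hns (hg.2 q.2 h2).1
  have hcard : (D ×ˢ D).card - A.card ≤ (D \ G).card * D.card := by
    calc (D ×ˢ D).card - A.card = ((D ×ˢ D) \ A).card := (Finset.card_sdiff_of_subset hAsub).symm
      _ ≤ ((D \ G) ×ˢ D).card := Finset.card_le_card hsub
      _ = (D \ G).card * D.card := Finset.card_product _ _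
  have hAle : A.card ≤ D.card * D.card := by
    calc A.card ≤ (D ×ˢ D).card := Finset.card_le_card hAsub
      _ = D.card * D.card := Finset.card_product _ _
  have hgle : G.card ≤ D.card := Finset.card_le_card hGsub
  have hkey : (D.card : ℝ) * D.card - A.card ≤ ((D.card : ℝ) - G.card) * D.card := by
    have := hcard
    rw [Finset.card_product, Finset.card_sdiff_of_subset hGsub] at this
    have h' : ((D.card * D.card - A.card : ℕ) : ℝ) ≤ (((D.card - G.card) * D.card : ℕ) : ℝ) := by
      exact_mod_cast this
    rwa [Nat.cast_mul, Nat.cast_sub hgle, Nat.cast_sub hAle, Nat.cast_mul] at h'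
  rw [hf1]
  rw [hf2] at h
  have hne : (D.card : ℝ) ≠ 0 := ne_of_gt hn0
  have h1' : (D.card : ℝ) - G.card ≤ ε * D.card := by
    have := mul_le_mul_of_nonneg_right h (le_of_lt hn0)
    rw [sub_mul, one_mul, div_mul_cancel₀ _ hne] at this
    exact this
  have hfinal : (D.card : ℝ) ^ 2 - A.card ≤ 2 * ε * (D.card : ℝ) ^ 2 := by
    nlinarith [hkey, mul_le_mul_of_nonneg_right h1' hn0.le,
      mul_nonneg hε (mul_pos hn0 hn0).le]
  calc 1 - (A.card : ℝ) / (D.card : ℝ) ^ 2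
      = ((D.card : ℝ) ^ 2 - A.card) / (D.card : ℝ) ^ 2 := by field_simp
    _ ≤ 2 * ε := by rw [div_le_iff₀ (by positivity)]; linarith [hfinal]
end

section
/- For every nonempty finite database D, every set of predicates S, and every real ε ≥ 0: if 1 − f3(D,S) ≤ ε, then 1 − f1(D,S) ≤ 2ε. -/
/-- if `1 - f3 D S ≤ ε` then `1 - f1 D S ≤ 2ε`. -/
theorem f3_le_implies_f1_le {α : Type*} (D : Finset α) (hD : D.Nonempty)
    (S : Set (α → α → Prop)) (ε : ℝ) (hε : 0 ≤ ε)
    (h : 1 - f3 D S ≤ ε) :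
    1 - f1 D S ≤ 2 * ε := by
  classical
  set K := {n : ℕ | ∃ D' : Finset α, D' ⊆ D ∧ (∀ t ∈ D', ∀ t' ∈ D', PairSat S t t') ∧
      D'.card = n} with hK
  have hK0 : 0 ∈ K := ⟨∅, by simp⟩
  have hKbdd : BddAbove K := by
    refine ⟨D.card, fun n hn => ?_⟩
    obtain ⟨D', hsub, -, hcard⟩ := hn
    exact hcard ▸ Finset.card_le_card hsub
  have hmem : sSup K ∈ K := Nat.sSup_mem ⟨0, hK0⟩ hKbdd
  obtain ⟨D', hsub, hsat, hcard⟩ := hmem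
  set m := sSup K with hm
  set n := D.card with hn
  have hnpos : 0 < (n : ℝ) := by exact_mod_cast Finset.card_pos.mpr hD
  have hmn : m ≤ n := hcard ▸ Finset.card_le_card hsub
  -- the satisfying-pairs set contains D' ×ˢ D'
  have hfin : {q : α × α | q.1 ∈ D ∧ q.2 ∈ D ∧ PairSat S q.1 q.2}.Finite := by
    apply Set.Finite.subset (D ×ˢ D : Finset (α × α)).finite_toSet
    intro q hq
    simp [Finset.mem_product, hq.1, hq.2.1]
  have hsubset : (↑(D' ×ˢ D') : Set (α × α)) ⊆
      {q : α × α | q.1 ∈ D ∧ q.2 ∈ D ∧ PairSat S q.1 q.2} := by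
    intro q hq
    simp only [Finset.coe_product, Set.mem_prod] at hq
    exact ⟨hsub hq.1, hsub hq.2, hsat _ hq.1 _ hq.2⟩
  have hcount : (m : ℝ) ^ 2 ≤
      (Set.ncard {q : α × α | q.1 ∈ D ∧ q.2 ∈ D ∧ PairSat S q.1 q.2} : ℝ) := by
    have := Set.ncard_le_ncard hsubset hfin
    rw [Set.ncard_coe_finset, Finset.card_product, hcard] at this
    have : m * m ≤ Set.ncard {q : α × α | q.1 ∈ D ∧ q.2 ∈ D ∧ PairSat S q.1 q.2} := this
    have h2 : (m : ℝ) * m ≤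
        (Set.ncard {q : α × α | q.1 ∈ D ∧ q.2 ∈ D ∧ PairSat S q.1 q.2} : ℝ) := by
      exact_mod_cast this
    nlinarith [h2]
  have hf1 : ((m : ℝ) / n) ^ 2 ≤ f1 D S := by
    rw [f1, div_pow]
    exact div_le_div_of_nonneg_right hcount (by positivity) |>.trans_eq rfl
  have hf3 : f3 D S = (m : ℝ) / n := rfl
  rw [hf3] at h
  set x : ℝ := (m : ℝ) / n with hx
  have hx1 : x ≤ 1 := by
    rw [hx, div_le_one hnpos]
    exact_mod_cast hmn
  nlinarith [hf1, hx1, h, hε]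
end
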